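/- (Skolem–Mahler–Lech for Q_p with unit roots) Let a_n = Σ_{i=1}^k c_i z_i^n be a sequence in Q_p, where c_i ∈ Z_p and z_i ∈ Z_p^× are p-adic units, p > 2. Then the set {n ∈ N : a_n = 0} is a finite union of a finite set and finitely many arithmetic progressions. -/

import Mathlib

open scoped BigOperators
open scoped NNReal ENNReal

namespace SMLAux
open Nat FormalMultilinearSeries

variable {p : ℕ} [Fact p.Prime]

lemma padicValNat_factorial_le (j : ℕ) : padicValNat p (j !) ≤ j := by
  have h := sub_one_mul_padicValNat_factorial (p := p) j
  have hp2 : 2 ≤ p := (Fact.out : p.Prime).two_le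
  have h1 : padicValNat p (j !) ≤ (p - 1) * padicValNat p (j !) :=
    Nat.le_mul_of_pos_left _ (by omega)
  omega

lemma norm_inv_factorial_le (j : ℕ) : ‖((j ! : ℚ_[p]))⁻¹‖ ≤ (p : ℝ) ^ j := by
  have hp1 : (1:ℝ) < p := by exact_mod_cast (Fact.out : p.Prime).one_lt
  have hj0 : ((j ! : ℚ_[p])) ≠ 0 := Nat.cast_ne_zero.mpr j.factorial_ne_zero
  rw [norm_inv, Padic.norm_eq_zpow_neg_valuation hj0, Padic.valuation_natCast, ← zpow_neg, neg_neg]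
  calc (p:ℝ) ^ (padicValNat p (j !) : ℤ) ≤ (p:ℝ) ^ (j : ℤ) := by
        apply zpow_le_zpow_right₀ hp1.le
        exact_mod_cast padicValNat_factorial_le j
    _ = (p:ℝ) ^ j := by norm_num

lemma norm_unit_pow_sub_one (z : ℤ_[p]) (hz : ‖z‖ = 1) :
    ‖(z ^ ((p - 1) * p) : ℤ_[p]) - 1‖ ≤ (p : ℝ) ^ (-2 : ℤ) := by
  have hker : ∀ x : ℤ_[p], PadicInt.toZMod x = 0 → ‖x‖ ≤ (p:ℝ) ^ (-1 : ℤ) := by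
    intro x hx
    have hx' : x ∈ RingHom.ker (PadicInt.toZMod (p := p)) := hx
    rw [PadicInt.ker_toZMod, PadicInt.maximalIdeal_eq_span_p] at hx'
    have hx'' : x ∈ Ideal.span {(p:ℤ_[p]) ^ 1} := by simpa using hx'
    simpa using (PadicInt.norm_le_pow_iff_mem_span_pow x 1).mpr hx''
  have hz0 : PadicInt.toZMod z ≠ 0 := by
    intro h0
    have h1 : z ∈ RingHom.ker (PadicInt.toZMod (p := p)) := h0
    rw [PadicInt.ker_toZMod] at h1
    exact (IsLocalRing.mem_maximalIdeal z).mp h1 (PadicInt.isUnit_iff.mpr hz)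
  set u := z ^ (p - 1) with hu
  have hu1 : PadicInt.toZMod u = 1 := by
    rw [hu, map_pow]
    exact ZMod.pow_card_sub_one_eq_one hz0
  have h2 : ‖u - 1‖ ≤ (p:ℝ) ^ (-1 : ℤ) := hker _ (by rw [map_sub, hu1, map_one, sub_self])
  have h3 : ‖∑ i ∈ Finset.range p, u ^ i‖ ≤ (p:ℝ) ^ (-1 : ℤ) := by
    apply hker
    rw [map_sum]
    simp [map_pow, hu1]
  have h4 : z ^ ((p - 1) * p) - 1 = (∑ i ∈ Finset.range p, u ^ i) * (u - 1) := by
    rw [geom_sum_mul, hu, ← pow_mul]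
  have hp0 : (0:ℝ) < p := by exact_mod_cast (Fact.out : p.Prime).pos
  rw [h4, norm_mul]
  calc ‖∑ i ∈ Finset.range p, u ^ i‖ * ‖u - 1‖ ≤ (p:ℝ) ^ (-1 : ℤ) * (p:ℝ) ^ (-1 : ℤ) :=
        mul_le_mul h3 h2 (norm_nonneg _) (by positivity)
    _ = (p:ℝ) ^ (-2 : ℤ) := by rw [← zpow_add₀ hp0.ne']; norm_num

noncomputable def term (p : ℕ) [Fact p.Prime] (E : ℚ_[p]) (j m : ℕ) : ℚ_[p] :=
  E ^ j * ((j ! : ℚ_[p]))⁻¹ * (descPochhammer ℚ_[p] j).coeff m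

lemma norm_poch_coeff_le (j m : ℕ) : ‖(descPochhammer ℚ_[p] j).coeff m‖ ≤ 1 := by
  rw [← descPochhammer_map (Int.castRingHom ℚ_[p]) j, Polynomial.coeff_map]
  exact Padic.norm_int_le_one _

lemma term_eq_zero {E : ℚ_[p]} {j m : ℕ} (h : j < m) : term p E j m = 0 := by
  rw [term, Polynomial.coeff_eq_zero_of_natDegree_lt, mul_zero]
  rwa [descPochhammer_natDegree]

lemma norm_term_le {E : ℚ_[p]} (hE : ‖E‖ ≤ (p : ℝ) ^ (-2 : ℤ)) (j m : ℕ) :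
    ‖term p E j m‖ ≤ ((p : ℝ)⁻¹) ^ j := by
  have hp0 : (0:ℝ) < p := by exact_mod_cast (Fact.out : p.Prime).pos
  have h1 : ‖E ^ j‖ ≤ ((p : ℝ) ^ (-2 : ℤ)) ^ j := by
    rw [norm_pow]; exact pow_le_pow_left₀ (norm_nonneg _) hE j
  have h2 := norm_inv_factorial_le (p := p) j
  calc ‖term p E j m‖ ≤ ‖E ^ j * ((j ! : ℚ_[p]))⁻¹‖ * 1 := by
        rw [term, norm_mul]
        exact mul_le_mul_of_nonneg_left (norm_poch_coeff_le j m) (norm_nonneg _)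
    _ = ‖E ^ j‖ * ‖((j ! : ℚ_[p]))⁻¹‖ := by rw [mul_one, norm_mul]
    _ ≤ ((p : ℝ) ^ (-2 : ℤ)) ^ j * (p : ℝ) ^ j := by
        apply mul_le_mul h1 h2 (norm_nonneg _) (by positivity)
    _ = ((p : ℝ)⁻¹) ^ j := by
        rw [← mul_pow]
        congr 1
        have hne : (p:ℝ) ≠ 0 := hp0.ne'
        rw [show ((-2:ℤ)) = (-(2:ℕ):ℤ) by norm_num, zpow_neg, zpow_natCast]
        field_simp

noncomputable def bcoef (p : ℕ) [Fact p.Prime] (E : ℚ_[p]) (m : ℕ) : ℚ_[p] :=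
  ∑' j, term p E j m

lemma norm_natCast_le_one (n : ℕ) : ‖((n : ℚ_[p]))‖ ≤ 1 := by
  have := Padic.norm_int_le_one (p := p) (n : ℤ)
  push_cast at this
  exact this

lemma summable_majorant :
    Summable (fun jm : ℕ × ℕ => if jm.2 ≤ jm.1 then ((p:ℝ)⁻¹) ^ jm.1 else 0) := by
  have hp1 : (1:ℝ) < p := by exact_mod_cast (Fact.out : p.Prime).one_lt
  have hr0 : (0:ℝ) ≤ (p:ℝ)⁻¹ := by positivity
  have hr1 : (p:ℝ)⁻¹ < 1 := by
    rw [inv_lt_one_iff₀]; right; exact hp1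
  rw [summable_prod_of_nonneg (by intro jm; dsimp; split <;> positivity)]
  constructor
  · intro j
    apply summable_of_ne_finset_zero (s := Finset.range (j + 1))
    intro m hm
    simp only [Finset.mem_range, not_lt] at hm
    have : ¬ (m ≤ j) := by omega
    simp [this]
  · have hval : ∀ j : ℕ, (∑' m : ℕ, if m ≤ j then ((p:ℝ)⁻¹) ^ j else 0)
        = ((j:ℝ) + 1) * ((p:ℝ)⁻¹) ^ j := by
      intro j
      rw [tsum_eq_sum (s := Finset.range (j + 1)) (by
        intro m hm
        simp only [Finset.mem_range, not_lt] at hm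
        have : ¬ (m ≤ j) := by omega
        simp [this])]
      rw [Finset.sum_congr rfl (fun m hm => by
        simp only [Finset.mem_range] at hm
        rw [if_pos (by omega)])]
      rw [Finset.sum_const, Finset.card_range, nsmul_eq_mul]
      push_cast; ring
    apply Summable.congr _ (fun j => (hval j).symm)
    have h1 : Summable (fun j : ℕ => (j:ℝ) ^ 1 * ((p:ℝ)⁻¹) ^ j) :=
      summable_pow_mul_geometric_of_norm_lt_one 1
        (by rwa [Real.norm_eq_abs, abs_of_nonneg hr0])
    have h2 : Summable (fun j : ℕ => ((p:ℝ)⁻¹) ^ j) := summable_geometric_of_lt_one hr0 hr1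
    exact Summable.congr (h1.add h2) (fun j => by push_cast; ring)

lemma summable_uncurry {E : ℚ_[p]} (hE : ‖E‖ ≤ (p : ℝ) ^ (-2 : ℤ)) {x : ℚ_[p]}
    (hx : ‖x‖ ≤ 1) :
    Summable (Function.uncurry fun j m => term p E j m * x ^ m) := by
  apply Summable.of_norm_bounded (summable_majorant (p := p))
  rintro ⟨j, m⟩
  by_cases h : m ≤ j
  · simp only [Function.uncurry, h, if_pos]
    calc ‖term p E j m * x ^ m‖ ≤ ((p:ℝ)⁻¹) ^ j * 1 := by
          rw [norm_mul]
          exact mul_le_mul (norm_term_le hE j m)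
            (by rw [norm_pow]; exact pow_le_one₀ (norm_nonneg _) hx)
            (norm_nonneg _) (by positivity)
      _ = ((p:ℝ)⁻¹) ^ j := mul_one _
  · have hlt : j < m := lt_of_not_ge h
    simp [Function.uncurry, h, term_eq_zero hlt]

lemma summable_bcoef_mul {E : ℚ_[p]} (hE : ‖E‖ ≤ (p : ℝ) ^ (-2 : ℤ)) {x : ℚ_[p]}
    (hx : ‖x‖ ≤ 1) :
    Summable (fun m => bcoef p E m * x ^ m) := by
  have hsum := summable_uncurry hE hx
  have := hsum.prod_symm.prod
  apply Summable.congr this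
  intro m
  simp only [Function.uncurry, Prod.fst_swap, Prod.snd_swap]
  rw [bcoef, tsum_mul_right]

lemma tsum_bcoef_natCast {E : ℚ_[p]} (hE : ‖E‖ ≤ (p : ℝ) ^ (-2 : ℤ)) (n : ℕ) :
    ∑' m, bcoef p E m * ((n : ℚ_[p])) ^ m = (1 + E) ^ n := by
  set x : ℚ_[p] := (n : ℚ_[p]) with hxdef
  have hx : ‖x‖ ≤ 1 := norm_natCast_le_one n
  have hsum := summable_uncurry hE hx
  have step1 : ∀ m, bcoef p E m * x ^ m = ∑' j, term p E j m * x ^ m := by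
    intro m
    rw [bcoef, tsum_mul_right]
  have step2 : ∑' (m) (j), term p E j m * x ^ m = ∑' (j) (m), term p E j m * x ^ m :=
    Summable.tsum_comm hsum
  have step3 : ∀ j, ∑' m, term p E j m * x ^ m
      = E ^ j * ((j ! : ℚ_[p]))⁻¹ * ((n.descFactorial j : ℕ) : ℚ_[p]) := by
    intro j
    have hterm : ∀ m, term p E j m * x ^ m
        = E ^ j * ((j ! : ℚ_[p]))⁻¹ * ((descPochhammer ℚ_[p] j).coeff m * x ^ m) := by
      intro m; rw [term]; ring
    rw [tsum_congr hterm, tsum_mul_left]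
    congr 1
    rw [tsum_eq_sum (s := Finset.range ((descPochhammer ℚ_[p] j).natDegree + 1)) (by
      intro m hm
      simp only [Finset.mem_range, not_lt] at hm
      rw [Polynomial.coeff_eq_zero_of_natDegree_lt (by omega), zero_mul])]
    rw [← Polynomial.eval_eq_sum_range, hxdef, descPochhammer_eval_eq_descFactorial]
  have step4 : ∀ j, E ^ j * ((j ! : ℚ_[p]))⁻¹ * ((n.descFactorial j : ℕ) : ℚ_[p])
      = ((n.choose j : ℕ) : ℚ_[p]) * E ^ j := by
    intro j
    have hdf : ((n.descFactorial j : ℕ) : ℚ_[p])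
        = ((j ! : ℕ) : ℚ_[p]) * ((n.choose j : ℕ) : ℚ_[p]) := by
      rw [← Nat.cast_mul, Nat.descFactorial_eq_factorial_mul_choose]
    have hfac : ((j ! : ℕ) : ℚ_[p]) ≠ 0 := Nat.cast_ne_zero.mpr j.factorial_ne_zero
    rw [hdf]
    field_simp
  calc ∑' m, bcoef p E m * x ^ m = ∑' (m) (j), term p E j m * x ^ m := tsum_congr step1
    _ = ∑' (j) (m), term p E j m * x ^ m := step2
    _ = ∑' j, ((n.choose j : ℕ) : ℚ_[p]) * E ^ j := by
        refine tsum_congr (fun j => ?_)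
        rw [step3 j, step4 j]
    _ = ∑ j ∈ Finset.range (n + 1), ((n.choose j : ℕ) : ℚ_[p]) * E ^ j := by
        apply tsum_eq_sum
        intro j hj
        simp only [Finset.mem_range, not_lt] at hj
        rw [Nat.choose_eq_zero_of_lt (by omega), Nat.cast_zero, zero_mul]
    _ = (1 + E) ^ n := by
        rw [add_comm (1:ℚ_[p]) E, add_pow]
        refine Finset.sum_congr rfl (fun j hj => ?_)
        rw [one_pow]
        ring


lemma norm_bcoef_le {E : ℚ_[p]} (hE : ‖E‖ ≤ (p : ℝ) ^ (-2 : ℤ)) (m : ℕ) :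
    ‖bcoef p E m‖ ≤ ((p:ℝ)⁻¹) ^ m := by
  apply IsUltrametricDist.norm_tsum_le_of_forall_le_of_nonneg (by positivity)
  intro j
  rcases lt_or_ge j m with h | h
  · rw [term_eq_zero h, norm_zero]
    positivity
  · refine (norm_term_le hE j m).trans (pow_le_pow_of_le_one (by positivity) ?_ h)
    have hp1 : (1:ℝ) ≤ p := by exact_mod_cast (Fact.out : p.Prime).one_lt.le
    rw [inv_le_one_iff₀]
    right; exact hp1
lemma finite_or_forall_zero (hp2 : 2 < p) (B : ℕ → ℚ_[p]) (C : ℝ)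
    (hB : ∀ m, ‖B m‖ * (p:ℝ) ^ m ≤ C) :
    {x : ℚ_[p] | ‖x‖ ≤ 1 ∧ ∑' m, B m * x ^ m = 0}.Finite ∨
      ∀ x : ℚ_[p], ‖x‖ ≤ 1 → ∑' m, B m * x ^ m = 0 := by
  set P : FormalMultilinearSeries ℚ_[p] ℚ_[p] ℚ_[p] := ofScalars ℚ_[p] B with hP
  set g : ℚ_[p] → ℚ_[p] := fun x => ∑' m, B m * x ^ m with hg
  have hgsum : P.sum = g := by
    funext x
    refine tsum_congr (fun m => ?_)
    rw [hP, ofScalars_apply_eq, smul_eq_mul]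
  have hrad : ((p : ℝ≥0) : ℝ≥0∞) ≤ P.radius := by
    apply P.le_radius_of_bound C
    intro n
    rw [hP, ofScalars_norm]
    exact_mod_cast hB n
  have hrad2 : (2 : ℝ≥0∞) < P.radius := by
    refine lt_of_lt_of_le ?_ hrad
    have : ((2 : ℝ≥0) : ℝ≥0∞) < ((p : ℝ≥0) : ℝ≥0∞) := by
      rw [ENNReal.coe_lt_coe]
      exact_mod_cast hp2
    simpa using this
  have hball : HasFPowerSeriesOnBall g P 0 P.radius := by
    rw [← hgsum]
    exact P.hasFPowerSeriesOnBall (lt_trans (by norm_num) hrad2)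
  set Z : Set ℚ_[p] := {x : ℚ_[p] | ‖x‖ ≤ 1 ∧ g x = 0} with hZ
  rcases Set.finite_or_infinite Z with h | h
  · exact Or.inl h
  · right
    obtain ⟨x₀, hx₀K, hacc⟩ := h.exists_accPt_of_subset_isCompact
      (isCompact_closedBall (0:ℚ_[p]) 1)
      (fun x hx => Metric.mem_closedBall.mpr (by simpa [dist_zero_right] using hx.1))
    have hx₀ : ‖x₀‖ ≤ 1 := by simpa [dist_zero_right] using Metric.mem_closedBall.mp hx₀K
    have hx₀n : ((‖x₀‖₊ : ℝ≥0) : ℝ≥0∞) ≤ 1 := by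
      rw [ENNReal.coe_le_one_iff]
      exact_mod_cast hx₀
    have hx₀ball : x₀ ∈ Metric.eball (0:ℚ_[p]) P.radius := by
      rw [Metric.mem_eball, edist_zero_right]
      exact lt_of_le_of_lt hx₀n (lt_trans (by norm_num) hrad2)
    have hanal : AnalyticAt ℚ_[p] g x₀ := hball.analyticAt_of_mem hx₀ball
    have hfreq : ∃ᶠ y in nhdsWithin x₀ {x₀}ᶜ, g y = 0 := by
      have h1 := (accPt_iff_frequently (x := x₀) (C := Z)).mp hacc
      rw [frequently_nhdsWithin_iff]
      exact h1.mono (fun y hy => ⟨hy.2.2, hy.1⟩)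
    have hev : g =ᶠ[nhds x₀] 0 := hanal.frequently_zero_iff_eventually_zero.mp hfreq
    have hchange := hball.changeOrigin (y := x₀)
      (lt_of_le_of_lt hx₀n (lt_trans (by norm_num) hrad2))
    rw [zero_add] at hchange
    have hq0 : P.changeOrigin x₀ = 0 := hchange.hasFPowerSeriesAt.eq_zero_of_eventually hev
    intro x hx
    have hyn : ((‖x - x₀‖₊ : ℝ≥0) : ℝ≥0∞) ≤ 1 := by
      rw [ENNReal.coe_le_one_iff]
      have : ‖x - x₀‖ ≤ max ‖x‖ ‖x₀‖ := by
        rw [sub_eq_add_neg]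
        exact (IsUltrametricDist.norm_add_le_max x (-x₀)).trans (by rw [norm_neg])
      have h1 : ‖x - x₀‖ ≤ 1 := this.trans (max_le hx hx₀)
      exact_mod_cast h1
    have hyball : (x - x₀) ∈ Metric.eball (0:ℚ_[p]) (P.radius - ‖x₀‖₊) := by
      rw [Metric.mem_eball, edist_zero_right]
      refine lt_of_le_of_lt hyn ?_
      have h2 : (1:ℝ≥0∞) < P.radius - 1 := by
        rw [lt_tsub_iff_right]
        calc (1:ℝ≥0∞) + 1 = 2 := by norm_num
          _ < P.radius := hrad2
      exact lt_of_lt_of_le h2 (tsub_le_tsub_left hx₀n P.radius)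
    have hval := hchange.sum hyball
    rw [hq0, add_sub_cancel] at hval
    show g x = 0
    rw [hval]
    simp [FormalMultilinearSeries.sum]


end SMLAux

/-- Skolem–Mahler–Lech for `ℚ_p` with unit roots: if `a_n = Σ_{i=1}^k c_i z_i^n` with
`c_i ∈ ℤ_p` and `z_i ∈ ℤ_p^×` `p`-adic units, `p > 2`, then `{n : a_n = 0}` is the union
of a finite set and finitely many arithmetic progressions. -/
theorem skolem_mahler_lech_units (p : ℕ) [Fact p.Prime] (hp : 2 < p)
    (k : ℕ) (c : Fin k → ℤ_[p]) (z : Fin k → ℤ_[p]) (hz : ∀ i, ‖z i‖ = 1)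
    (a : ℕ → ℚ_[p]) (ha : ∀ n, a n = ∑ i : Fin k, (c i : ℚ_[p]) * (z i : ℚ_[p]) ^ n) :
    ∃ (S : Finset ℕ) (P : Finset (ℕ × ℕ)),
      (∀ q ∈ P, 0 < q.1) ∧
      { n : ℕ | a n = 0 } = ↑S ∪ ⋃ q ∈ P, { n : ℕ | ∃ m : ℕ, n = q.2 + q.1 * m } := by
  classical
  have hprime : p.Prime := Fact.out
  have hp0 : (0:ℝ) < p := by exact_mod_cast hprime.pos
  set N := (p - 1) * p with hNdef
  have hN : 0 < N := by
    have h2 := hprime.two_le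
    have : 1 ≤ p - 1 := by omega
    calc 0 < 1 * 2 := by norm_num
      _ ≤ (p - 1) * p := Nat.mul_le_mul this h2
  set E : Fin k → ℚ_[p] := fun i => ((z i : ℚ_[p])) ^ N - 1 with hEdef
  have hE : ∀ i, ‖E i‖ ≤ (p:ℝ) ^ (-2:ℤ) := by
    intro i
    have h := SMLAux.norm_unit_pow_sub_one (z i) (hz i)
    rw [PadicInt.norm_def] at h
    have hcast : ((z i ^ N - 1 : ℤ_[p]) : ℚ_[p]) = ((z i : ℚ_[p])) ^ N - 1 := by
      push_cast; ring
    rw [hcast] at h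
    exact h
  set B : ℕ → ℕ → ℚ_[p] :=
    fun r m => ∑ i, (c i : ℚ_[p]) * (z i : ℚ_[p]) ^ r * SMLAux.bcoef p (E i) m with hBdef
  have hBbound : ∀ r m, ‖B r m‖ * (p:ℝ) ^ m ≤ 1 := by
    intro r m
    have h1 : ‖B r m‖ ≤ ((p:ℝ)⁻¹) ^ m := by
      apply IsUltrametricDist.norm_sum_le_of_forall_le_of_nonneg (by positivity)
      intro i _
      have hc1 : ‖(c i : ℚ_[p])‖ ≤ 1 := by
        rw [← PadicInt.norm_def]; exact PadicInt.norm_le_one _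
      have hz1 : ‖(z i : ℚ_[p]) ^ r‖ = 1 := by
        rw [norm_pow, ← PadicInt.norm_def, hz i, one_pow]
      calc ‖(c i : ℚ_[p]) * (z i : ℚ_[p]) ^ r * SMLAux.bcoef p (E i) m‖
          = ‖(c i : ℚ_[p])‖ * ‖(z i : ℚ_[p]) ^ r‖ * ‖SMLAux.bcoef p (E i) m‖ := by
            rw [norm_mul, norm_mul]
        _ ≤ 1 * ((p:ℝ)⁻¹) ^ m := by
            refine mul_le_mul ?_ (SMLAux.norm_bcoef_le (hE i) m) (norm_nonneg _) (by norm_num)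
            rw [hz1, mul_one]; exact hc1
        _ = ((p:ℝ)⁻¹) ^ m := one_mul _
    calc ‖B r m‖ * (p:ℝ) ^ m ≤ ((p:ℝ)⁻¹) ^ m * (p:ℝ) ^ m :=
          mul_le_mul_of_nonneg_right h1 (by positivity)
      _ = 1 := by rw [← mul_pow, inv_mul_cancel₀ hp0.ne', one_pow]
  have key1 : ∀ r q : ℕ, (∑' m, B r m * ((q : ℚ_[p])) ^ m) = a (N * q + r) := by
    intro r q
    have hxq : ‖((q:ℚ_[p]))‖ ≤ 1 := SMLAux.norm_natCast_le_one q
    have hsummand : ∀ i : Fin k, Summable (fun m =>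
        (c i : ℚ_[p]) * (z i : ℚ_[p]) ^ r * SMLAux.bcoef p (E i) m * ((q:ℚ_[p])) ^ m) := by
      intro i
      have := (SMLAux.summable_bcoef_mul (hE i) hxq).mul_left
        ((c i : ℚ_[p]) * (z i : ℚ_[p]) ^ r)
      exact this.congr (fun m => by ring)
    calc (∑' m, B r m * ((q : ℚ_[p])) ^ m)
        = ∑' m, ∑ i, ((c i : ℚ_[p]) * (z i : ℚ_[p]) ^ r * SMLAux.bcoef p (E i) m
            * ((q:ℚ_[p])) ^ m) := by
          refine tsum_congr (fun m => ?_)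
          rw [hBdef]
          exact Finset.sum_mul _ _ _
      _ = ∑ i, ∑' m, ((c i : ℚ_[p]) * (z i : ℚ_[p]) ^ r * SMLAux.bcoef p (E i) m
            * ((q:ℚ_[p])) ^ m) := Summable.tsum_finsetSum (fun i _ => hsummand i)
      _ = ∑ i, (c i : ℚ_[p]) * (z i : ℚ_[p]) ^ r * (1 + E i) ^ q := by
          refine Finset.sum_congr rfl (fun i _ => ?_)
          have hre : ∀ m : ℕ, (c i:ℚ_[p]) * (z i:ℚ_[p])^r * SMLAux.bcoef p (E i) m * (q:ℚ_[p])^m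
              = (c i:ℚ_[p]) * (z i:ℚ_[p])^r * (SMLAux.bcoef p (E i) m * (q:ℚ_[p])^m) :=
            fun m => by ring
          rw [tsum_congr hre, tsum_mul_left, SMLAux.tsum_bcoef_natCast (hE i) q]
      _ = ∑ i, (c i : ℚ_[p]) * (z i : ℚ_[p]) ^ (N * q + r) := by
          refine Finset.sum_congr rfl (fun i _ => ?_)
          have h1 : (1 : ℚ_[p]) + E i = ((z i : ℚ_[p])) ^ N := by rw [hEdef]; ring
          rw [h1, ← pow_mul, pow_add]
          ring
      _ = a (N * q + r) := (ha _).symm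
  have dich : ∀ r : ℕ, {q : ℕ | a (N * q + r) = 0}.Finite ∨ ∀ q : ℕ, a (N * q + r) = 0 := by
    intro r
    rcases SMLAux.finite_or_forall_zero hp (B r) 1 (hBbound r) with h | h
    · left
      have hsub : {q : ℕ | a (N * q + r) = 0} ⊆ (fun q : ℕ => ((q:ℚ_[p]))) ⁻¹'
          {x : ℚ_[p] | ‖x‖ ≤ 1 ∧ ∑' m, B r m * x ^ m = 0} := fun q hq =>
        ⟨SMLAux.norm_natCast_le_one q, by rw [key1 r q]; exact hq⟩
      exact (h.preimage Nat.cast_injective.injOn).subset hsub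
    · right
      intro q
      rw [← key1 r q]
      exact h _ (SMLAux.norm_natCast_le_one q)
  set Good : ℕ → Prop := fun r => ∀ q : ℕ, a (N * q + r) = 0 with hGood
  set T : ℕ → Set ℕ := fun r => if Good r then (∅ : Set ℕ) else {q : ℕ | a (N * q + r) = 0}
    with hT
  have hTfin : ∀ r, (T r).Finite := by
    intro r
    by_cases hgr : Good r
    · simp only [hT]
      rw [if_pos hgr]
      exact Set.finite_empty
    · simp only [hT, if_neg hgr]
      exact (dich r).resolve_right hgr
  have hSfin : (⋃ r ∈ Finset.range N, (fun q => N * q + r) '' T r).Finite :=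
    Set.Finite.biUnion (Finset.range N).finite_toSet (fun r _ => ((hTfin r).image _))
  refine ⟨hSfin.toFinset, ((Finset.range N).filter Good).image (fun r => (N, r)), ?_, ?_⟩
  · intro q hq
    simp only [Finset.mem_image, Finset.mem_filter] at hq
    obtain ⟨r, _, rfl⟩ := hq
    exact hN
  · ext n
    rw [Set.mem_union, Set.Finite.coe_toFinset]
    constructor
    · intro hn
      have hn0 : a n = 0 := hn
      by_cases hgood : Good (n % N)
      · right
        refine Set.mem_iUnion₂.mpr ⟨(N, n % N), ?_, ?_⟩
        · simp only [Finset.mem_coe, Finset.mem_image, Finset.mem_filter, Finset.mem_range]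
          exact ⟨n % N, ⟨Nat.mod_lt n hN, hgood⟩, rfl⟩
        · exact ⟨n / N, (Nat.mod_add_div n N).symm⟩
      · left
        refine Set.mem_iUnion₂.mpr ⟨n % N, Finset.mem_range.mpr (Nat.mod_lt n hN), ?_⟩
        refine ⟨n / N, ?_, Nat.div_add_mod n N⟩
        rw [hT]
        simp only [if_neg hgood, Set.mem_setOf_eq]
        show a (N * (n / N) + n % N) = 0
        rw [Nat.div_add_mod]
        exact hn0
    · intro hn
      show a n = 0
      rcases hn with hn | hn
      · obtain ⟨r, hr, hmem⟩ := Set.mem_iUnion₂.mp hn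
        obtain ⟨q, hq, rfl⟩ := hmem
        by_cases hgr : Good r
        · simp only [hT] at hq
          rw [if_pos hgr] at hq
          exact absurd hq (Set.notMem_empty _)
        · simp only [hT] at hq
          simp only [if_neg hgr, Set.mem_setOf_eq] at hq
          exact hq
      · obtain ⟨q', hq', hmem⟩ := Set.mem_iUnion₂.mp hn
        simp only [Finset.mem_coe, Finset.mem_image, Finset.mem_filter, Finset.mem_range] at hq'
        obtain ⟨r, ⟨hrN, hgr⟩, rfl⟩ := hq'
        obtain ⟨m, rfl⟩ := hmem
        have hval := hgr m
        rw [Nat.add_comm]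
        exact hval
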